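/- Let x ∈ S and μ a finite positive Borel measure on S. Define θ₀ := min(2, inf{r ≥ 0 : μ(B(x,r)) ≥ 1}) − 1 ∈ [−1,1] (with inf ∅ = +∞). Then ‖δ_x − μ‖*_FM = ∫ max(−1, θ₀ − d(x,·)) d(δ_x − μ). -/

import Mathlib

open MeasureTheory
open scoped ENNReal

private lemma aux_max_sub {a b c : ℝ} (h : b ≤ c) : max a c - max a b ≤ c - b := by
  have h1 : max a c ≤ max a b + (c - b) :=
    max_le (by linarith [le_max_left a b]) (by linarith [le_max_right a b])
  linarith

/-- Theorem 3.4, optimal θ₀ for ‖δ_x − μ‖*_FM, μ positive finite.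
The infimum is taken in ℝ≥0∞ so that inf ∅ = ∞ (and min(2,∞) = 2). -/
theorem stmt_10 {S : Type*} [MetricSpace S] [MeasurableSpace S] [BorelSpace S]
    (x : S) (μ : Measure S) [IsFiniteMeasure μ] :
    let θ0 : ℝ :=
      ((⨅ r ∈ {r : ℝ | 0 ≤ r ∧ 1 ≤ μ (Metric.ball x r)}, ENNReal.ofReal r) ⊓ 2).toReal - 1
    sSup {r : ℝ | ∃ f : S → ℝ, LipschitzWith 1 f ∧ (∀ y, |f y| ≤ 1) ∧
        r = ∫ y, f y ∂(Measure.dirac x) - ∫ y, f y ∂μ}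
      = ∫ y, max (-1) (θ0 - dist x y) ∂(Measure.dirac x) -
          ∫ y, max (-1) (θ0 - dist x y) ∂μ := by
  intro θ0
  set I : ℝ≥0∞ := ⨅ r ∈ {r : ℝ | 0 ≤ r ∧ 1 ≤ μ (Metric.ball x r)}, ENNReal.ofReal r with hI
  have hRtop : I ⊓ 2 ≠ ⊤ := ne_top_of_le_ne_top (by simp) inf_le_right
  set t : ℝ := (I ⊓ 2).toReal with htdef
  have hθ0 : θ0 = t - 1 := rfl
  have ht0 : 0 ≤ t := ENNReal.toReal_nonneg
  have ht2 : t ≤ 2 := by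
    have := ENNReal.toReal_mono (by simp) (inf_le_right : I ⊓ 2 ≤ 2)
    simpa using this
  -- key : any radius with mass ≥ 1 is ≥ t
  have key : ∀ s : ℝ, 1 ≤ μ (Metric.ball x s) → t ≤ s := by
    intro s hs
    have hs0 : 0 ≤ s := by
      by_contra h
      push_neg at h
      rw [Metric.ball_eq_empty.mpr h.le] at hs
      simp at hs
    have hIs : I ≤ ENNReal.ofReal s := iInf₂_le s ⟨hs0, hs⟩
    have hR' : I ⊓ 2 ≤ ENNReal.ofReal s := le_trans inf_le_left hIs
    calc t ≤ (ENNReal.ofReal s).toReal := ENNReal.toReal_mono ENNReal.ofReal_ne_top hR'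
      _ = s := ENNReal.toReal_ofReal hs0
  -- fact A : μ(ball x t) ≤ 1
  have factA : μ (Metric.ball x t) ≤ 1 := by
    have hU : Metric.ball x t = ⋃ n : ℕ, Metric.ball x (t - 1 / (n + 1)) := by
      ext y
      simp only [Metric.mem_ball, Set.mem_iUnion]
      constructor
      · intro h
        obtain ⟨n, hn⟩ := exists_nat_one_div_lt (sub_pos.mpr h)
        exact ⟨n, by linarith⟩
      · rintro ⟨n, hn⟩
        have : (0 : ℝ) < 1 / (n + 1) := by positivity
        linarith
    have hdir : Directed (· ⊆ ·) fun n : ℕ => Metric.ball x (t - 1 / (n + 1)) := by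
      apply Monotone.directed_le
      intro m n hmn
      apply Metric.ball_subset_ball
      have : (1 : ℝ) / (n + 1) ≤ 1 / (m + 1) := by
        apply one_div_le_one_div_of_le (by positivity)
        exact_mod_cast by exact_mod_cast Nat.add_le_add_right hmn 1
      linarith
    rw [hU, hdir.measure_iUnion]
    apply iSup_le
    intro n
    by_contra h
    push_neg at h
    have hk := key (t - 1 / (n + 1)) h.le
    have : (0 : ℝ) < 1 / (n + 1) := by positivity
    linarith
  -- fact B : if t < 2 then μ(closedBall x t) ≥ 1
  have factB : t < 2 → 1 ≤ μ (Metric.closedBall x t) := by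
    intro h2
    have hI2 : I ≤ 2 := by
      by_contra h
      push_neg at h
      have hR2 : I ⊓ 2 = 2 := inf_eq_right.mpr h.le
      rw [htdef, hR2] at h2
      simp at h2
    have hIR : I ⊓ 2 = I := inf_eq_left.mpr hI2
    have hItop : I ≠ ⊤ := hIR ▸ hRtop
    have hball : ∀ ε : ℝ, 0 < ε → 1 ≤ μ (Metric.ball x (t + ε)) := by
      intro ε hε
      have hIt : I = ENNReal.ofReal t := by
        rw [htdef, hIR, ENNReal.ofReal_toReal hItop]
      have h1 : I < ENNReal.ofReal (t + ε) := by
        rw [hIt]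
        exact (ENNReal.ofReal_lt_ofReal_iff (by linarith)).mpr (by linarith)
      rw [hI] at h1
      obtain ⟨r, hrA, hr⟩ : ∃ r ∈ {r : ℝ | 0 ≤ r ∧ 1 ≤ μ (Metric.ball x r)},
          ENNReal.ofReal r < ENNReal.ofReal (t + ε) := by
        simpa [iInf_lt_iff] using h1
      have hrlt : r < t + ε := (ENNReal.ofReal_lt_ofReal_iff (by linarith)).mp hr
      exact le_trans hrA.2 (measure_mono (Metric.ball_subset_ball hrlt.le))
    have hcb : Metric.closedBall x t = ⋂ n : ℕ, Metric.ball x (t + 1 / (n + 1)) := by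
      ext y
      simp only [Metric.mem_closedBall, Metric.mem_ball, Set.mem_iInter]
      constructor
      · intro h n
        have : (0 : ℝ) < 1 / (n + 1) := by positivity
        linarith
      · intro h
        by_contra hc
        push_neg at hc
        obtain ⟨n, hn⟩ := exists_nat_one_div_lt (sub_pos.mpr hc)
        have := h n
        linarith
    have hanti : Directed (· ⊇ ·) fun n : ℕ => Metric.ball x (t + 1 / (n + 1)) := by
      apply Antitone.directed_ge
      intro m n hmn
      apply Metric.ball_subset_ball
      have : (1 : ℝ) / (n + 1) ≤ 1 / (m + 1) := by
        apply one_div_le_one_div_of_le (by positivity)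
        exact_mod_cast by exact_mod_cast Nat.add_le_add_right hmn 1
      linarith
    rw [hcb, Directed.measure_iInter (fun n => (Metric.isOpen_ball.measurableSet).nullMeasurableSet)
      hanti ⟨0, measure_ne_top μ _⟩]
    exact le_iInf fun n => hball _ (by positivity)
  -- basic properties of cone functions
  have lip : ∀ θ : ℝ, LipschitzWith 1 fun y => max (-1) (θ - dist x y) := by
    intro θ
    have h1 : LipschitzWith 1 fun y : S => θ - dist x y := by
      apply LipschitzWith.of_dist_le_mul
      intro y z
      rw [Real.dist_eq, NNReal.coe_one, one_mul]
      have h := abs_dist_sub_le y z x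
      rw [dist_comm y x, dist_comm z x] at h
      have he : θ - dist x y - (θ - dist x z) = -(dist x y - dist x z) := by ring
      rw [he, abs_neg]
      exact h
    have h2 : LipschitzWith 1 fun y : S => (-1 : ℝ) := by
      simpa using (LipschitzWith.const (-1 : ℝ) : LipschitzWith 0 _).weaken zero_le_one
    simpa using h2.max h1
  have bnd : ∀ θ : ℝ, -1 ≤ θ → θ ≤ 1 → ∀ y, |max (-1) (θ - dist x y)| ≤ 1 := by
    intro θ h1 h2 y
    rw [abs_le]
    refine ⟨le_max_left _ _, max_le (by norm_num) ?_⟩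
    have := dist_nonneg (x := x) (y := y)
    linarith
  have integ : ∀ f : S → ℝ, LipschitzWith 1 f → (∀ y, |f y| ≤ 1) → Integrable f μ := by
    intro f hf hb
    exact (integrable_const (1 : ℝ)).mono' hf.continuous.aestronglyMeasurable
      (ae_of_all _ fun y => by simpa [Real.norm_eq_abs] using hb y)
  have hθ0m : -1 ≤ θ0 ∧ θ0 ≤ 1 := by rw [hθ0]; constructor <;> linarith
  set g : S → ℝ := fun y => max (-1) (θ0 - dist x y) with hg
  have hgx : g x = θ0 := by
    simp only [hg, dist_self, sub_zero]
    exact max_eq_right hθ0m.1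
  have hint_g : Integrable g μ := integ g (lip θ0) (bnd θ0 hθ0m.1 hθ0m.2)
  -- main estimate
  have main : ∀ f : S → ℝ, LipschitzWith 1 f → (∀ y, |f y| ≤ 1) →
      f x - ∫ y, f y ∂μ ≤ θ0 - ∫ y, g y ∂μ := by
    intro f hf hb
    set θ : ℝ := f x with hθ
    have hθ1 : -1 ≤ θ := (abs_le.mp (hb x)).1
    have hθ2 : θ ≤ 1 := (abs_le.mp (hb x)).2
    set fθ : S → ℝ := fun y => max (-1) (θ - dist x y) with hfθ
    have hpt : fθ ≤ f := by
      intro y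
      apply max_le
      · linarith [(abs_le.mp (hb y)).1]
      · have hd := hf.dist_le_mul x y
        rw [Real.dist_eq] at hd
        have := (abs_le.mp (by simpa using hd)).2
        simp only [hfθ]
        linarith
    have hint_f : Integrable f μ := integ f hf hb
    have hint_fθ : Integrable fθ μ := integ fθ (lip θ) (bnd θ hθ1 hθ2)
    have h1 : ∫ y, fθ y ∂μ ≤ ∫ y, f y ∂μ := integral_mono hint_fθ hint_f hpt
    have h2 : θ - ∫ y, fθ y ∂μ ≤ θ0 - ∫ y, g y ∂μ := by
      rcases le_or_gt θ θ0 with hc | hc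
      · -- θ ≤ θ0 : use μ(ball x t) ≤ 1
        have hptub : ∀ y, g y - fθ y ≤
            (Metric.ball x t).indicator (fun _ => θ0 - θ) y := by
          intro y
          by_cases hy : y ∈ Metric.ball x t
          · rw [Set.indicator_of_mem hy]
            have := aux_max_sub (a := -1) (b := θ - dist x y) (c := θ0 - dist x y)
              (by linarith)
            simp only [hg, hfθ]
            linarith
          · rw [Set.indicator_of_notMem hy]
            simp only [Metric.mem_ball, not_lt] at hy
            rw [dist_comm] at hy
            have hle : θ0 - dist x y ≤ -1 := by rw [hθ0]; linarith
            have hgy : g y = -1 := max_eq_left hle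
            have hfy : -1 ≤ fθ y := le_max_left _ _
            simp only [hgy]
            linarith
        have hib : Integrable ((Metric.ball x t).indicator fun _ => θ0 - θ) μ :=
          (integrable_const _).indicator Metric.isOpen_ball.measurableSet
        have hII : ∫ y, (g y - fθ y) ∂μ ≤
            ∫ y, (Metric.ball x t).indicator (fun _ => θ0 - θ) y ∂μ :=
          integral_mono (hint_g.sub hint_fθ) hib hptub
        rw [integral_indicator_const _ Metric.isOpen_ball.measurableSet] at hII
        rw [integral_sub hint_g hint_fθ] at hII
        change _ ≤ (μ (Metric.ball x t)).toReal • (θ0 - θ) at hII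
        have hμ1 : (μ (Metric.ball x t)).toReal ≤ 1 := by
          have := ENNReal.toReal_mono (by simp) factA
          simpa using this
        have hμ0 : 0 ≤ (μ (Metric.ball x t)).toReal := ENNReal.toReal_nonneg
        have : (μ (Metric.ball x t)).toReal • (θ0 - θ) ≤ θ0 - θ := by
          rw [smul_eq_mul]
          nlinarith
        linarith
      · -- θ0 < θ : use μ(closedBall x t) ≥ 1
        have h2lt : t < 2 := by rw [hθ0] at hc; linarith
        have hcb := factB h2lt
        have hptlb : ∀ y, (Metric.closedBall x t).indicator (fun _ => θ - θ0) y ≤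
            fθ y - g y := by
          intro y
          by_cases hy : y ∈ Metric.closedBall x t
          · rw [Set.indicator_of_mem hy]
            simp only [Metric.mem_closedBall] at hy
            rw [dist_comm] at hy
            have hg1 : -1 ≤ θ0 - dist x y := by rw [hθ0]; linarith
            have hgy : g y = θ0 - dist x y := max_eq_right hg1
            have hfy : fθ y = θ - dist x y := max_eq_right (by linarith)
            simp only [hgy, hfy]
            linarith
          · rw [Set.indicator_of_notMem hy]
            have : g y ≤ fθ y := max_le_max le_rfl (by linarith)
            linarith
        have hib : Integrable ((Metric.closedBall x t).indicator fun _ => θ - θ0) μ :=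
          (integrable_const _).indicator measurableSet_closedBall
        have hII : ∫ y, (Metric.closedBall x t).indicator (fun _ => θ - θ0) y ∂μ ≤
            ∫ y, (fθ y - g y) ∂μ :=
          integral_mono hib (hint_fθ.sub hint_g) hptlb
        rw [integral_indicator_const _ measurableSet_closedBall] at hII
        rw [integral_sub hint_fθ hint_g] at hII
        change (μ (Metric.closedBall x t)).toReal • (θ - θ0) ≤ _ at hII
        have hμ1 : 1 ≤ (μ (Metric.closedBall x t)).toReal := by
          have := ENNReal.toReal_mono (measure_ne_top μ _) hcb
          simpa using this
        have : θ - θ0 ≤ (μ (Metric.closedBall x t)).toReal • (θ - θ0) := by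
          rw [smul_eq_mul]
          nlinarith
        linarith
    linarith
  -- membership and bddAbove
  have hmem : (∫ y, g y ∂(Measure.dirac x) - ∫ y, g y ∂μ) ∈
      {r : ℝ | ∃ f : S → ℝ, LipschitzWith 1 f ∧ (∀ y, |f y| ≤ 1) ∧
        r = ∫ y, f y ∂(Measure.dirac x) - ∫ y, f y ∂μ} :=
    ⟨g, lip θ0, bnd θ0 hθ0m.1 hθ0m.2, rfl⟩
  have hbdd : BddAbove {r : ℝ | ∃ f : S → ℝ, LipschitzWith 1 f ∧ (∀ y, |f y| ≤ 1) ∧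
      r = ∫ y, f y ∂(Measure.dirac x) - ∫ y, f y ∂μ} := by
    refine ⟨1 + (μ Set.univ).toReal, ?_⟩
    rintro r ⟨f, hf, hb, rfl⟩
    rw [integral_dirac]
    have h1 : f x ≤ 1 := (abs_le.mp (hb x)).2
    have h2 : ∫ y, (-1 : ℝ) ∂μ ≤ ∫ y, f y ∂μ :=
      integral_mono (integrable_const _) (integ f hf hb) fun y => (abs_le.mp (hb y)).1
    rw [integral_const, smul_eq_mul] at h2
    change (μ Set.univ).toReal * -1 ≤ _ at h2
    have h3 : 0 ≤ (μ Set.univ).toReal := ENNReal.toReal_nonneg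
    nlinarith
  apply le_antisymm
  · apply csSup_le ⟨_, hmem⟩
    rintro r ⟨f, hf, hb, rfl⟩
    rw [integral_dirac, integral_dirac]
    calc f x - ∫ y, f y ∂μ ≤ θ0 - ∫ y, g y ∂μ := main f hf hb
      _ = g x - ∫ y, g y ∂μ := by rw [hgx]
  · exact le_csSup hbdd hmem
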